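/- Let n ≥ 2 and let 𝒜 be a Δ-free family of subsets of [n] with |𝒜| = 2^(n-1). If 𝒜 contains at least one set of even cardinality, then 𝒜 contains exactly 2^(n-2) sets of even cardinality and exactly 2^(n-2) sets of odd cardinality. -/

import Mathlib

set_option maxHeartbeats 1000000

lemma card_symmDiff_eq {α : Type*} [DecidableEq α] (A B : Finset α) :
    (symmDiff A B).card + 2 * (A ∩ B).card = A.card + B.card := by
  have h1 : (symmDiff A B).card = (A \ B).card + (B \ A).card := by
    rw [symmDiff_def]
    exact Finset.card_union_of_disjoint (disjoint_sdiff_sdiff)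
  have h2 := Finset.card_sdiff_add_card_inter A B
  have h3 := Finset.card_sdiff_add_card_inter B A
  rw [Finset.inter_comm] at h3
  omega

lemma even_symmDiff_iff {α : Type*} [DecidableEq α] (A B : Finset α) :
    Even (symmDiff A B).card ↔ (Even A.card ↔ Even B.card) := by
  have := card_symmDiff_eq A B
  rw [Nat.even_iff, Nat.even_iff, Nat.even_iff]
  omega

/-- A family `𝒜` of subsets of `[n]` is Δ-free if for all `A, B ∈ 𝒜`,
the symmetric difference `A ∆ B` is not a member of `𝒜`. -/
def DeltaFree {n : ℕ} (𝒜 : Finset (Finset (Fin n))) : Prop :=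
  ∀ A ∈ 𝒜, ∀ B ∈ 𝒜, symmDiff A B ∉ 𝒜

theorem stmt_7 (n : ℕ) (hn : 2 ≤ n) (𝒜 : Finset (Finset (Fin n)))
    (hfree : DeltaFree 𝒜) (hcard : 𝒜.card = 2 ^ (n - 1))
    (heven : ∃ A ∈ 𝒜, Even A.card) :
    (𝒜.filter (fun A => Even A.card)).card = 2 ^ (n - 2) ∧
    (𝒜.filter (fun A => Odd A.card)).card = 2 ^ (n - 2) := by
  obtain ⟨A₀, hA₀, hA₀e⟩ := heven
  have hpow : 2 ^ n = 2 ^ (n - 1) * 2 := by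
    rw [← pow_succ]; congr 1; omega
  have hcardc : (𝒜ᶜ).card = 2 ^ (n - 1) := by
    rw [Finset.card_compl, hcard, Fintype.card_finset, Fintype.card_fin]
    omega
  -- image of 𝒜 under symmDiff A is all of 𝒜ᶜ
  have L1 : ∀ A ∈ 𝒜, Finset.image (fun X => symmDiff A X) 𝒜 = 𝒜ᶜ := by
    intro A hA
    apply Finset.eq_of_subset_of_card_le
    · intro x hx
      simp only [Finset.mem_image] at hx
      obtain ⟨B, hB, rfl⟩ := hx
      simpa using hfree A hA B hB
    · rw [hcardc, Finset.card_image_of_injective _ (symmDiff_right_injective A), hcard]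
  -- 𝒜ᶜ is closed under symmDiff
  have L2 : ∀ x ∈ 𝒜ᶜ, ∀ y ∈ 𝒜ᶜ, symmDiff x y ∈ 𝒜ᶜ := by
    intro x hx y hy
    rw [← L1 A₀ hA₀] at hx hy
    simp only [Finset.mem_image] at hx hy
    obtain ⟨B, hB, rfl⟩ := hx
    obtain ⟨C, hC, rfl⟩ := hy
    have : symmDiff (symmDiff A₀ B) (symmDiff A₀ C) = symmDiff B C := by
      ext i; simp [Finset.mem_symmDiff]; tauto
    rw [this]
    simpa using hfree B hB C hC
  -- 𝒜 = A₀ Δ 𝒜ᶜ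
  have L3 : ∀ x ∈ 𝒜ᶜ, symmDiff A₀ x ∈ 𝒜 := by
    intro x hx
    rw [← L1 A₀ hA₀] at hx
    simp only [Finset.mem_image] at hx
    obtain ⟨B, hB, rfl⟩ := hx
    rwa [symmDiff_symmDiff_cancel_left]
  -- there is an odd-cardinality element of 𝒜ᶜ
  have L4 : ∃ h₁ ∈ 𝒜ᶜ, ¬ Even h₁.card := by
    by_contra hc
    push_neg at hc
    have hAe : ∀ A ∈ 𝒜, Even A.card := by
      intro A hA
      have hh : symmDiff A₀ A ∈ 𝒜ᶜ := by simpa using hfree A₀ hA₀ A hA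
      have := hc _ hh
      rw [even_symmDiff_iff] at this
      tauto
    set S : Finset (Fin n) := {(⟨0, by omega⟩ : Fin n)} with hS
    have hodd : ¬ Even S.card := by simp [hS]
    by_cases hSA : S ∈ 𝒜
    · exact hodd (hAe S hSA)
    · exact hodd (hc S (Finset.mem_compl.mpr hSA))
  obtain ⟨h₁, hh₁, hh₁o⟩ := L4
  -- symmDiff h₁ maps 𝒜 into 𝒜
  have L5 : ∀ A ∈ 𝒜, symmDiff h₁ A ∈ 𝒜 := by
    intro A hA
    have h2 : symmDiff A₀ A ∈ 𝒜ᶜ := by simpa using hfree A₀ hA₀ A hA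
    have h3 : symmDiff (symmDiff A₀ A) h₁ ∈ 𝒜ᶜ := L2 _ h2 _ hh₁
    have h4 := L3 _ h3
    have : symmDiff A₀ (symmDiff (symmDiff A₀ A) h₁) = symmDiff h₁ A := by
      ext i; simp [Finset.mem_symmDiff]; tauto
    rwa [this] at h4
  -- the two filters have equal cardinality
  classical
  have key : (𝒜.filter (fun A => Even A.card)).card
      = (𝒜.filter (fun A => ¬ Even A.card)).card := by
    apply le_antisymm
    · apply Finset.card_le_card_of_injOn (fun A => symmDiff h₁ A)
      · intro A hA
        simp only [Finset.mem_coe, Finset.mem_filter] at hA ⊢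
        refine ⟨L5 A hA.1, ?_⟩
        rw [even_symmDiff_iff]
        tauto
      · exact fun A _ B _ h => symmDiff_right_injective h₁ h
    · apply Finset.card_le_card_of_injOn (fun A => symmDiff h₁ A)
      · intro A hA
        simp only [Finset.mem_coe, Finset.mem_filter] at hA ⊢
        refine ⟨L5 A hA.1, ?_⟩
        rw [even_symmDiff_iff]
        tauto
      · exact fun A _ B _ h => symmDiff_right_injective h₁ h
  have hsum := Finset.card_filter_add_card_filter_not
    (s := 𝒜) (p := fun A => Even A.card)
  rw [hcard] at hsum
  have hpow2 : 2 ^ (n - 1) = 2 ^ (n - 2) * 2 := by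
    rw [← pow_succ]; congr 1; omega
  have hoddfilter : 𝒜.filter (fun A => Odd A.card)
      = 𝒜.filter (fun A => ¬ Even A.card) := by
    apply Finset.filter_congr
    intro A _
    exact Iff.symm Nat.not_even_iff_odd
  constructor
  · omega
  · rw [hoddfilter]; omega
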